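/- Let K ≥ 2 be any integer (even or odd), let m ≥ 1 be an integer, set N = mK, and let α ∈ [0,2]. Then the Colonel Blotto game B_α(N,K) has a symmetric equilibrium strategy σ that induces uniform marginals, and in the resulting equilibrium each player's expected payoff equals K·(m + α/2)/(2m + 1). -/

import Mathlib

open Finset

/-- The set of pure strategies: allocations of `N` units of the resource
over `K` battlefields. -/
def pureStrats (K N : ℕ) : Finset (Fin K → ℕ) := Finset.Nat.antidiagonalTuple K N

/-- Payoff in the Colonel Blotto game `B_α(N,K)` of playing `s` against `t`:
`π(s,t) = Σ_k [1_{s_k > t_k} + (α/2)·1_{s_k = t_k}]`. -/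
noncomputable def payoff (α : ℝ) {K : ℕ} (s t : Fin K → ℕ) : ℝ :=
  ∑ k, ((if t k < s k then (1 : ℝ) else 0) + α / 2 * (if s k = t k then 1 else 0))

/-- `σ` is a mixed strategy: a probability distribution on the pure strategies. -/
def IsMixed (K N : ℕ) (σ : (Fin K → ℕ) → ℝ) : Prop :=
  (∀ s, 0 ≤ σ s) ∧ (∀ s, s ∉ pureStrats K N → σ s = 0) ∧
    ∑ s ∈ pureStrats K N, σ s = 1

/-- Expected payoff of the mixed strategy `σ` against the mixed strategy `τ`. -/
noncomputable def expPayoff (α : ℝ) (K N : ℕ) (σ τ : (Fin K → ℕ) → ℝ) : ℝ :=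
  ∑ s ∈ pureStrats K N, ∑ t ∈ pureStrats K N, σ s * τ t * payoff α s t

/-- `(σA, σB)` is a mixed-strategy Nash equilibrium: both are mixed strategies and
neither player can strictly improve by a unilateral deviation. -/
def IsNashEq (α : ℝ) (K N : ℕ) (σA σB : (Fin K → ℕ) → ℝ) : Prop :=
  IsMixed K N σA ∧ IsMixed K N σB ∧
    (∀ σ', IsMixed K N σ' → expPayoff α K N σ' σB ≤ expPayoff α K N σA σB) ∧
    (∀ τ', IsMixed K N τ' → expPayoff α K N τ' σA ≤ expPayoff α K N σB σA)

/-- The marginal distribution of `σ` at battlefield `k`, evaluated at `x`. -/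
noncomputable def marginal (K N : ℕ) (σ : (Fin K → ℕ) → ℝ) (k : Fin K) (x : ℕ) : ℝ :=
  ∑ s ∈ (pureStrats K N).filter (fun s => s k = x), σ s

/-- `σ` induces uniform marginals on `{0,1,…,2m}` at every battlefield. -/
def UniformMarginals (K N m : ℕ) (σ : (Fin K → ℕ) → ℝ) : Prop :=
  ∀ k x, marginal K N σ k x = if x ≤ 2 * m then (1 : ℝ) / (2 * m + 1) else 0

/-! ### Auxiliary construction: a Latin-column family of pure strategies -/

/-- For each battlefield index `k`, a permutation of `{0,…,2m}` (as a function of the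
parameter `j`), chosen so that the columns sum to `m*K` for every `j`. -/
def blottoPerm (K m k j : ℕ) : ℕ :=
  if K % 2 = 0 then (if k % 2 = 0 then j else 2*m - j)
  else if k = 0 then j
  else if k = 1 then (if j < m then j + m + 1 else j - m)
  else if k = 2 then (if j < m then 2*m - (2*j+1) else 4*m - 2*j)
  else if k % 2 = 1 then j else 2*m - j

lemma blottoPerm_le (K m k j : ℕ) (hj : j ≤ 2*m) : blottoPerm K m k j ≤ 2*m := by
  unfold blottoPerm; split_ifs <;> first | contradiction | omega

lemma blottoPerm_inj (K m k : ℕ) {j1 j2 : ℕ} (h1 : j1 ≤ 2*m) (h2 : j2 ≤ 2*m)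
    (h : blottoPerm K m k j1 = blottoPerm K m k j2) : j1 = j2 := by
  unfold blottoPerm at h; split_ifs at h <;> first | contradiction | omega

lemma blottoSumPair (g : ℕ → ℕ) (c n : ℕ) (h : ∀ i, i < n → g (2*i) + g (2*i+1) = c) :
    ∑ k ∈ Finset.range (2*n), g k = n * c := by
  induction n with
  | zero => simp
  | succ n ih =>
    have h2 : 2*(n+1) = (2*n+1)+1 := by ring
    rw [h2, Finset.sum_range_succ, Finset.sum_range_succ,
      ih (fun i hi => h i (by omega)), add_assoc, h n (by omega)]
    ring

lemma blottoPerm_pair_even (K m j i : ℕ) (hj : j ≤ 2*m) (hpar : K % 2 = 0) :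
    blottoPerm K m (2*i) j + blottoPerm K m (2*i+1) j = 2*m := by
  unfold blottoPerm; split_ifs <;> first | contradiction | omega

lemma blottoPerm_pair_odd (K m j i : ℕ) (hj : j ≤ 2*m) (hpar : K % 2 = 1) :
    blottoPerm K m (3+2*i) j + blottoPerm K m (3+(2*i+1)) j = 2*m := by
  unfold blottoPerm; split_ifs <;> first | contradiction | omega

lemma blottoPerm_head_odd (K m j : ℕ) (hj : j ≤ 2*m) (hpar : K % 2 = 1) :
    ∑ k ∈ Finset.range 3, blottoPerm K m k j = 3*m := by
  rw [show (3:ℕ) = 2+1 from rfl, Finset.sum_range_succ,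
    Finset.sum_range_succ, Finset.sum_range_succ, Finset.sum_range_zero]
  simp only [zero_add]
  unfold blottoPerm; split_ifs <;> first | contradiction | omega

lemma blottoPerm_sum (K m j : ℕ) (hK : 2 ≤ K) (hj : j ≤ 2*m) :
    ∑ k ∈ Finset.range K, blottoPerm K m k j = m * K := by
  by_cases hpar : K % 2 = 0
  · obtain ⟨n, hn⟩ : ∃ n, K = 2*n := ⟨K/2, by omega⟩
    rw [show (range K) = range (2*n) from by rw [hn],
      blottoSumPair _ (2*m) _ (fun i hi => blottoPerm_pair_even K m j i hj hpar), hn]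
    ring
  · have hpar1 : K % 2 = 1 := by omega
    obtain ⟨n, hn⟩ : ∃ n, K = 3 + 2*n := ⟨(K-3)/2, by omega⟩
    rw [show (range K) = range (3+2*n) from by rw [hn], Finset.sum_range_add,
      blottoSumPair _ (2*m) _ (fun i hi => blottoPerm_pair_odd K m j i hj hpar1),
      blottoPerm_head_odd K m j hj hpar1, hn]
    ring

/-- The `j`-th pure strategy of the family. -/
def blottoS (K m : ℕ) (j : ℕ) : Fin K → ℕ := fun k => blottoPerm K m k.val j

/-- The uniform mixture over the family `blottoS K m j`, `j ∈ {0,…,2m}`. -/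
noncomputable def blottoSigma (K m : ℕ) : (Fin K → ℕ) → ℝ :=
  fun s => (((Finset.range (2*m+1)).filter (fun j => blottoS K m j = s)).card : ℝ) / (2*m+1)

section Construction

variable {K m N : ℕ}

lemma blottoS_mem (hK : 2 ≤ K) (hN : N = m * K) {j : ℕ} (hj : j ∈ Finset.range (2*m+1)) :
    blottoS K m j ∈ pureStrats K N := by
  rw [pureStrats, Finset.Nat.mem_antidiagonalTuple]
  have : ∑ i : Fin K, blottoS K m j i = ∑ i ∈ Finset.range K, blottoPerm K m i j :=
    Fin.sum_univ_eq_sum_range (fun i => blottoPerm K m i j) K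
  rw [this, blottoPerm_sum K m j hK (by simp at hj; omega), hN]

lemma blottoFiberSum (hK : 2 ≤ K) (hN : N = m * K) :
    ∑ s ∈ pureStrats K N,
      ((Finset.range (2*m+1)).filter (fun j => blottoS K m j = s)).card = 2*m+1 := by
  exact (Finset.card_eq_sum_card_fiberwise
    (fun j hj => blottoS_mem hK hN hj)).symm.trans (Finset.card_range _)

lemma blottoFiberSumFilter (hK : 2 ≤ K) (hN : N = m * K) (k : Fin K) (x : ℕ) :
    ∑ s ∈ (pureStrats K N).filter (fun s => s k = x),
      ((Finset.range (2*m+1)).filter (fun j => blottoS K m j = s)).card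
    = ((Finset.range (2*m+1)).filter (fun j => blottoS K m j k = x)).card := by
  rw [Finset.card_eq_sum_card_fiberwise
    (f := blottoS K m) (t := (pureStrats K N).filter (fun s => s k = x))
    (fun j hj => by
      simp only [Finset.mem_coe, Finset.mem_filter] at hj ⊢
      exact ⟨blottoS_mem hK hN hj.1, hj.2⟩)]
  refine Finset.sum_congr rfl (fun b hb => ?_)
  simp only [Finset.mem_filter] at hb
  rw [Finset.filter_filter]
  refine congrArg Finset.card (Finset.filter_congr (fun j hj => ?_))
  constructor
  · intro h; exact ⟨by rw [h, hb.2], h⟩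
  · rintro ⟨_, h⟩; exact h

lemma blottoParamCard (k : Fin K) (x : ℕ) :
    ((Finset.range (2*m+1)).filter (fun j => blottoS K m j k = x)).card
      = if x ≤ 2*m then 1 else 0 := by
  split_ifs with hx
  · have himg : (Finset.range (2*m+1)).image (fun j => blottoPerm K m k.val j)
        = Finset.range (2*m+1) := by
      apply Finset.eq_of_subset_of_card_le
      · intro y hy
        simp only [Finset.mem_image, Finset.mem_range] at hy ⊢
        obtain ⟨j, hj, rfl⟩ := hy
        have := blottoPerm_le K m k.val j (by omega); omega
      · rw [Finset.card_image_of_injOn (fun a ha b hb hab => by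
          simp only [Finset.coe_range, Set.mem_Iio] at ha hb
          exact blottoPerm_inj K m k.val (by omega) (by omega) hab)]
    have hxmem : x ∈ (Finset.range (2*m+1)).image (fun j => blottoPerm K m k.val j) := by
      rw [himg]; simp; omega
    obtain ⟨j0, hj0, hj0x⟩ := Finset.mem_image.mp hxmem
    have hsing : (Finset.range (2*m+1)).filter (fun j => blottoS K m j k = x) = {j0} := by
      apply Finset.eq_singleton_iff_unique_mem.mpr
      refine ⟨Finset.mem_filter.mpr ⟨hj0, hj0x⟩, fun y hy => ?_⟩
      obtain ⟨hy1, hy2⟩ := Finset.mem_filter.mp hy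
      simp only [Finset.mem_range] at hy1 hj0
      have hy3 : y ≤ 2*m := by omega
      have hj03 : j0 ≤ 2*m := by omega
      exact blottoPerm_inj K m k.val hy3 hj03 (hy2.trans hj0x.symm)
    rw [hsing, Finset.card_singleton]
  · rw [Finset.card_eq_zero, Finset.filter_eq_empty_iff]
    intro j hj
    simp only [Finset.mem_range] at hj
    have := blottoPerm_le K m k.val j (by omega)
    intro hc
    exact hx (by rw [← hc]; exact this)

lemma blottoMarg (hK : 2 ≤ K) (hN : N = m * K) (k : Fin K) (x : ℕ) :
    marginal K N (blottoSigma K m) k x = if x ≤ 2*m then (1:ℝ)/(2*(m:ℝ)+1) else 0 := by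
  rw [marginal]
  simp only [blottoSigma]
  rw [← Finset.sum_div]
  rw [show ∑ s ∈ (pureStrats K N).filter (fun s => s k = x),
      (((Finset.range (2*m+1)).filter (fun j => blottoS K m j = s)).card : ℝ)
      = ((∑ s ∈ (pureStrats K N).filter (fun s => s k = x),
        ((Finset.range (2*m+1)).filter (fun j => blottoS K m j = s)).card : ℕ) : ℝ) from
      by push_cast; ring]
  rw [blottoFiberSumFilter hK hN k x, blottoParamCard k x]
  split_ifs with hx <;> push_cast <;> simp

lemma blottoSigma_nonneg (s : Fin K → ℕ) : 0 ≤ blottoSigma K m s := by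
  unfold blottoSigma; positivity

lemma blottoSigma_zero (hK : 2 ≤ K) (hN : N = m * K) {s : Fin K → ℕ}
    (hs : s ∉ pureStrats K N) : blottoSigma K m s = 0 := by
  unfold blottoSigma
  rw [div_eq_zero_iff]; left
  norm_cast
  rw [Finset.card_eq_zero, Finset.filter_eq_empty_iff]
  intro j hj hc
  exact hs (hc ▸ blottoS_mem hK hN hj)

lemma blottoSigma_sum (hK : 2 ≤ K) (hN : N = m * K) :
    ∑ s ∈ pureStrats K N, blottoSigma K m s = 1 := by
  unfold blottoSigma
  rw [← Finset.sum_div]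
  rw [show ∑ s ∈ pureStrats K N,
      (((Finset.range (2*m+1)).filter (fun j => blottoS K m j = s)).card : ℝ)
      = ((∑ s ∈ pureStrats K N,
        ((Finset.range (2*m+1)).filter (fun j => blottoS K m j = s)).card : ℕ) : ℝ) from
      by push_cast; ring]
  rw [blottoFiberSum hK hN]
  push_cast
  field_simp

end Construction

/-! ### Payoff analysis against a uniform-marginal strategy -/

lemma blottoSumU (m n : ℕ) :
    ∑ x ∈ Finset.range n, (if x ≤ 2*m then (1:ℝ)/(2*(m:ℝ)+1) else 0)
      = ((min n (2*m+1) : ℕ) : ℝ) / (2*(m:ℝ)+1) := by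
  rw [← Finset.sum_filter]
  have he : (Finset.range n).filter (fun x => x ≤ 2*m) = Finset.range (min n (2*m+1)) := by
    ext y; simp only [Finset.mem_filter, Finset.mem_range, lt_min_iff]; omega
  rw [he, Finset.sum_const, Finset.card_range, nsmul_eq_mul]
  ring

lemma marginal_eq_sum_ite (K N : ℕ) (σ : (Fin K → ℕ) → ℝ) (k : Fin K) (x : ℕ) :
    marginal K N σ k x = ∑ t ∈ pureStrats K N, if t k = x then σ t else 0 := by
  rw [marginal, Finset.sum_filter]

lemma blottoInnerSum (α : ℝ) (K N m : ℕ) (σ : (Fin K → ℕ) → ℝ)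
    (hu : UniformMarginals K N m σ) (s : Fin K → ℕ) :
    ∑ t ∈ pureStrats K N, σ t * payoff α s t
      = ∑ k : Fin K, (((min (s k) (2*m+1) : ℕ) : ℝ) / (2*(m:ℝ)+1)
          + α/2 * (if s k ≤ 2*m then (1:ℝ)/(2*(m:ℝ)+1) else 0)) := by
  unfold payoff
  simp_rw [Finset.mul_sum]
  rw [Finset.sum_comm]
  refine Finset.sum_congr rfl (fun k _ => ?_)
  have hsplit : ∀ t : Fin K → ℕ,
      σ t * ((if t k < s k then (1:ℝ) else 0) + α / 2 * (if s k = t k then 1 else 0))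
      = (if t k < s k then σ t else 0) + α/2 * (if t k = s k then σ t else 0) := by
    intro t
    by_cases h1 : t k < s k <;> by_cases h2 : s k = t k <;>
      simp [h1, h2, eq_comm, Ne.symm] <;> ring
  simp_rw [hsplit]
  rw [Finset.sum_add_distrib, ← Finset.mul_sum]
  have hm2 : ∑ t ∈ pureStrats K N, (if t k = s k then σ t else 0)
      = marginal K N σ k (s k) := (marginal_eq_sum_ite K N σ k (s k)).symm
  have hm1 : ∑ t ∈ pureStrats K N, (if t k < s k then σ t else 0)
      = ∑ x ∈ Finset.range (s k), marginal K N σ k x := by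
    simp_rw [marginal_eq_sum_ite]
    rw [Finset.sum_comm]
    refine Finset.sum_congr rfl (fun t _ => ?_)
    rw [Finset.sum_ite_eq (Finset.range (s k)) (t k) (fun _ => σ t)]
    simp [Finset.mem_range]
  rw [hm1, hm2, hu k (s k)]
  simp_rw [hu k]
  rw [blottoSumU m (s k)]

lemma blottoInnerLe (α : ℝ) (hα : 0 ≤ α) (K N m : ℕ) (hN : N = m * K)
    (σ : (Fin K → ℕ) → ℝ) (hu : UniformMarginals K N m σ) (s : Fin K → ℕ)
    (hs : s ∈ pureStrats K N) :
    ∑ t ∈ pureStrats K N, σ t * payoff α s t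
      ≤ (K : ℝ) * ((m:ℝ) + α/2) / (2*(m:ℝ)+1) := by
  rw [blottoInnerSum α K N m σ hu s]
  have hM : (0:ℝ) < 2*(m:ℝ)+1 := by positivity
  have hb : ∀ k : Fin K, ((min (s k) (2*m+1) : ℕ) : ℝ) / (2*(m:ℝ)+1)
      + α/2 * (if s k ≤ 2*m then (1:ℝ)/(2*(m:ℝ)+1) else 0)
      ≤ ((s k : ℝ) + α/2) / (2*(m:ℝ)+1) := by
    intro k
    by_cases h : s k ≤ 2*m
    · rw [if_pos h, Nat.min_eq_left (by omega)]
      rw [mul_one_div, ← add_div]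
    · rw [if_neg h, Nat.min_eq_right (by omega), mul_zero, add_zero]
      rw [div_le_div_iff₀ hM hM]
      have h1 : (2*(m:ℝ)+1) ≤ (s k : ℝ) + α/2 := by
        have : (2*m+1 : ℕ) ≤ s k := by omega
        have := (Nat.cast_le (α := ℝ)).mpr this
        push_cast at this ⊢
        linarith
      push_cast
      nlinarith
  calc ∑ k : Fin K, (((min (s k) (2*m+1) : ℕ) : ℝ) / (2*(m:ℝ)+1)
          + α/2 * (if s k ≤ 2*m then (1:ℝ)/(2*(m:ℝ)+1) else 0))
      ≤ ∑ k : Fin K, ((s k : ℝ) + α/2) / (2*(m:ℝ)+1) := Finset.sum_le_sum (fun k _ => hb k)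
    _ = (K : ℝ) * ((m:ℝ) + α/2) / (2*(m:ℝ)+1) := by
        rw [← Finset.sum_div, Finset.sum_add_distrib]
        have hsum : ∑ k : Fin K, (s k : ℝ) = (N : ℝ) := by
          rw [pureStrats, Finset.Nat.mem_antidiagonalTuple] at hs
          rw [← hs]; push_cast; rfl
        rw [hsum, Finset.sum_const, Finset.card_univ, Fintype.card_fin, hN]
        push_cast; ring

lemma blottoInnerEq (α : ℝ) (K N m : ℕ) (hN : N = m * K)
    (σ : (Fin K → ℕ) → ℝ) (hu : UniformMarginals K N m σ) (s : Fin K → ℕ)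
    (hs : s ∈ pureStrats K N) (hle : ∀ k, s k ≤ 2*m) :
    ∑ t ∈ pureStrats K N, σ t * payoff α s t
      = (K : ℝ) * ((m:ℝ) + α/2) / (2*(m:ℝ)+1) := by
  rw [blottoInnerSum α K N m σ hu s]
  have : ∀ k : Fin K, ((min (s k) (2*m+1) : ℕ) : ℝ) / (2*(m:ℝ)+1)
      + α/2 * (if s k ≤ 2*m then (1:ℝ)/(2*(m:ℝ)+1) else 0)
      = ((s k : ℝ) + α/2) / (2*(m:ℝ)+1) := by
    intro k
    rw [if_pos (hle k), Nat.min_eq_left (by have := hle k; omega)]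
    rw [mul_one_div, ← add_div]
  simp_rw [this]
  rw [← Finset.sum_div, Finset.sum_add_distrib]
  have hsum : ∑ k : Fin K, (s k : ℝ) = (N : ℝ) := by
    rw [pureStrats, Finset.Nat.mem_antidiagonalTuple] at hs
    rw [← hs]; push_cast; rfl
  rw [hsum, Finset.sum_const, Finset.card_univ, Fintype.card_fin, hN]
  push_cast; ring

lemma expPayoff_eq_inner (α : ℝ) (K N : ℕ) (τ σ : (Fin K → ℕ) → ℝ) :
    expPayoff α K N τ σ
      = ∑ s ∈ pureStrats K N, τ s * ∑ t ∈ pureStrats K N, σ t * payoff α s t := by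
  rw [expPayoff]
  refine Finset.sum_congr rfl (fun s _ => ?_)
  rw [Finset.mul_sum]
  exact Finset.sum_congr rfl (fun t _ => by ring)

theorem stmt10 (K m N : ℕ) (hK : 2 ≤ K) (hm : 1 ≤ m) (hN : N = m * K)
    (α : ℝ) (hα : α ∈ Set.Icc (0 : ℝ) 2) :
    ∃ σ, UniformMarginals K N m σ ∧ IsNashEq α K N σ σ ∧
      expPayoff α K N σ σ = (K : ℝ) * ((m : ℝ) + α / 2) / (2 * (m : ℝ) + 1) := by
  obtain ⟨hα0, hα2⟩ := hα
  set σ := blottoSigma K m with hσdef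
  have hu : UniformMarginals K N m σ := by
    intro k x
    rw [blottoMarg hK hN k x]
  have hmix : IsMixed K N σ :=
    ⟨fun s => blottoSigma_nonneg s, fun s hs => blottoSigma_zero hK hN hs,
      blottoSigma_sum hK hN⟩
  have hsupp : ∀ s ∈ pureStrats K N, σ s ≠ 0 → ∀ k, s k ≤ 2*m := by
    intro s hs hne k
    by_contra hgt
    push_neg at hgt
    have h1 : σ s ≤ marginal K N σ k (s k) :=
      Finset.single_le_sum (fun t _ => hmix.1 t) (Finset.mem_filter.mpr ⟨hs, rfl⟩)
    rw [hu k (s k), if_neg (by omega)] at h1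
    exact hne (le_antisymm h1 (hmix.1 s))
  have hval : expPayoff α K N σ σ = (K : ℝ) * ((m:ℝ) + α/2) / (2*(m:ℝ)+1) := by
    rw [expPayoff_eq_inner]
    have : ∀ s ∈ pureStrats K N,
        σ s * ∑ t ∈ pureStrats K N, σ t * payoff α s t
          = σ s * ((K : ℝ) * ((m:ℝ) + α/2) / (2*(m:ℝ)+1)) := by
      intro s hs
      rcases eq_or_ne (σ s) 0 with h | h
      · rw [h, zero_mul, zero_mul]
      · rw [blottoInnerEq α K N m hN σ hu s hs (hsupp s hs h)]
    rw [Finset.sum_congr rfl this, ← Finset.sum_mul, hmix.2.2, one_mul]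
  have hbr : ∀ σ', IsMixed K N σ' → expPayoff α K N σ' σ ≤ expPayoff α K N σ σ := by
    intro σ' h'
    rw [hval, expPayoff_eq_inner]
    calc ∑ s ∈ pureStrats K N, σ' s * ∑ t ∈ pureStrats K N, σ t * payoff α s t
        ≤ ∑ s ∈ pureStrats K N, σ' s * ((K : ℝ) * ((m:ℝ) + α/2) / (2*(m:ℝ)+1)) :=
          Finset.sum_le_sum (fun s hs => mul_le_mul_of_nonneg_left
            (blottoInnerLe α hα0 K N m hN σ hu s hs) (h'.1 s))
      _ = (K : ℝ) * ((m:ℝ) + α/2) / (2*(m:ℝ)+1) := by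
          rw [← Finset.sum_mul, h'.2.2, one_mul]
  exact ⟨σ, hu, ⟨hmix, hmix, fun σ' h' => hbr σ' h', fun τ' h' => hbr τ' h'⟩, hval⟩
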